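/- Fix an integer ℓ ≥ 2, an integer k ≥ 1, and an ℓ-periodic function r : ℤ → ℕ. In the field K of rational functions over ℚ in the variables y, q̃_0, …, q̃_{ℓ−1} (with q̃ extended ℓ-periodically and z := q̃_0 ⋯ q̃_{ℓ−1}), set u_a := (q̃_{−a} q̃_{−a−1} ⋯ q̃_{−ℓ+1})^{−1} ∈ K for 1 ≤ a ≤ ℓ−1. Then the following identity holds: ∏_{(a,c) : 1 ≤ a, c ≤ ℓ−1, a ≠ c} ∏_{t=1}^{r_a} (1 − y^{−2t} z^{k−1} q̃_a q̃_{a−1} ⋯ q̃_{a−c+1}) = ∏_{1 ≤ a < c ≤ ℓ−1} [∏_{t=1}^{r_{ℓ−c}} (1 − y^{−2t} z^k u_a u_c^{−1})] · [∏_{t=1}^{r_{ℓ−a}} (1 − y^{−2t} z^{k−1} u_a^{−1} u_c)]. (This is Lemma B.2 of the paper, identity (eq:PPsix), equivalently identity (eq:PPfourDB), stated in factor form.) -/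

import Mathlib

noncomputable section

open MvPolynomial

lemma zmod_prod_shift {n : ℕ} [NeZero n] {M : Type*} [CommMonoid M] (Q : ZMod n → M) (A : ℤ) :
    ∏ b ∈ Finset.range n, Q (((A - (b : ℤ)) : ℤ) : ZMod n) = ∏ x : ZMod n, Q x := by
  refine Finset.prod_nbij' (fun b => (((A - (b : ℤ)) : ℤ) : ZMod n))
    (fun x => ((A : ZMod n) - x).val) ?_ ?_ ?_ ?_ ?_
  · intro b _; exact Finset.mem_univ _
  · intro x _; exact Finset.mem_range.mpr (ZMod.val_lt _)
  · intro b hb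
    have hb' := Finset.mem_range.mp hb
    push_cast
    rw [sub_sub_cancel, ZMod.val_natCast_of_lt hb']
  · intro x _
    push_cast
    rw [ZMod.natCast_val, ZMod.cast_id, sub_sub_cancel]
  · intro b _; rfl

lemma zmod_prod_nat {n : ℕ} [NeZero n] {M : Type*} [CommMonoid M] (Q : ZMod n → M) :
    ∏ b ∈ Finset.range n, Q (((b : ℕ) : ℤ) : ZMod n) = ∏ x : ZMod n, Q x := by
  refine Finset.prod_nbij' (fun b => (((b : ℕ) : ℤ) : ZMod n)) (fun x => x.val) ?_ ?_ ?_ ?_ ?_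
  · intro b _; exact Finset.mem_univ _
  · intro x _; exact Finset.mem_range.mpr (ZMod.val_lt _)
  · intro b hb
    have hb' := Finset.mem_range.mp hb
    push_cast
    rw [ZMod.val_natCast_of_lt hb']
  · intro x _
    push_cast
    rw [ZMod.natCast_val, ZMod.cast_id]
  · intro b _; rfl

lemma int_cast_zmod_congr {n : ℕ} {a b : ℤ} (w : ℤ) (h : b - a = n * w) : ((a : ZMod n)) = b :=
  (ZMod.intCast_eq_intCast_iff a b n).mpr (Int.modEq_iff_dvd.mpr ⟨w, h⟩)

theorem stmt15 (ℓ : ℕ) (hℓ : 2 ≤ ℓ) (k : ℕ) (hk : 1 ≤ k) (r : ℤ → ℕ)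
    (hr : ∀ a : ℤ, r (a + ℓ) = r a) :
    let K := FractionRing (MvPolynomial (Option (ZMod ℓ)) ℚ)
    let y : K := algebraMap (MvPolynomial (Option (ZMod ℓ)) ℚ) K (X none)
    let qt : ℤ → K := fun a =>
      algebraMap (MvPolynomial (Option (ZMod ℓ)) ℚ) K (X (some (a : ZMod ℓ)))
    let z : K := ∏ b ∈ Finset.range ℓ, qt (b : ℤ)
    let u : ℕ → K := fun a => (∏ b ∈ Finset.Icc a (ℓ - 1), qt (-(b : ℤ)))⁻¹
    (∏ p ∈ (Finset.Icc 1 (ℓ - 1) ×ˢ Finset.Icc 1 (ℓ - 1)).filter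
          (fun p : ℕ × ℕ => p.1 ≠ p.2),
        ∏ t ∈ Finset.Icc 1 (r (p.1 : ℤ)),
          (1 - y ^ (-(2 * (t : ℤ))) * z ^ (k - 1) *
            ∏ b ∈ Finset.range p.2, qt ((p.1 : ℤ) - (b : ℤ))))
    = ∏ c ∈ Finset.Icc 1 (ℓ - 1), ∏ a ∈ Finset.Ico 1 c,
        (∏ t ∈ Finset.Icc 1 (r ((ℓ : ℤ) - (c : ℤ))),
          (1 - y ^ (-(2 * (t : ℤ))) * z ^ k * u a * (u c)⁻¹)) *
        (∏ t ∈ Finset.Icc 1 (r ((ℓ : ℤ) - (a : ℤ))),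
          (1 - y ^ (-(2 * (t : ℤ))) * z ^ (k - 1) * (u a)⁻¹ * u c)) := by
  intro K y qt z u
  haveI : NeZero ℓ := ⟨by omega⟩
  have hqt_def : ∀ a : ℤ,
      qt a = algebraMap (MvPolynomial (Option (ZMod ℓ)) ℚ) K (X (some (a : ZMod ℓ))) :=
    fun _ => rfl
  have hqt_ne : ∀ a : ℤ, qt a ≠ 0 := by
    intro a h
    rw [hqt_def] at h
    have hinj := IsFractionRing.injective (MvPolynomial (Option (ZMod ℓ)) ℚ) K
    have h0 : (X (some ((a : ZMod ℓ))) : MvPolynomial (Option (ZMod ℓ)) ℚ) = 0 :=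
      hinj (by simpa using h)
    exact X_ne_zero _ h0
  have hqt_congr : ∀ a b : ℤ, ((a : ZMod ℓ) = (b : ZMod ℓ)) → qt a = qt b := by
    intro a b h
    rw [hqt_def, hqt_def, h]
  set Pf : ℤ → ℕ → K := fun A C => ∏ b ∈ Finset.range C, qt (A - (b : ℤ)) with hPf
  have hP_ne : ∀ (A : ℤ) (C : ℕ), Pf A C ≠ 0 := fun A C =>
    Finset.prod_ne_zero_iff.mpr fun b _ => hqt_ne _
  have hP_congr : ∀ (A B : ℤ) (C : ℕ), ((A : ZMod ℓ) = (B : ZMod ℓ)) → Pf A C = Pf B C := by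
    intro A B C h
    refine Finset.prod_congr rfl fun b _ => hqt_congr _ _ ?_
    push_cast
    rw [h]
  have hP_split : ∀ (A : ℤ) (C D : ℕ), Pf A (C + D) = Pf A C * Pf (A - C) D := by
    intro A C D
    rw [hPf]
    simp only []
    rw [Finset.prod_range_add]
    congr 1
    refine Finset.prod_congr rfl fun b _ => ?_
    congr 1
    push_cast
    ring
  have hP_full : ∀ A : ℤ, Pf A ℓ = z := by
    intro A
    have h1 : Pf A ℓ = ∏ x : ZMod ℓ,
        algebraMap (MvPolynomial (Option (ZMod ℓ)) ℚ) K (X (some x)) :=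
      zmod_prod_shift (fun x => algebraMap (MvPolynomial (Option (ZMod ℓ)) ℚ) K (X (some x))) A
    have h2 : z = ∏ x : ZMod ℓ,
        algebraMap (MvPolynomial (Option (ZMod ℓ)) ℚ) K (X (some x)) :=
      zmod_prod_nat (fun x => algebraMap (MvPolynomial (Option (ZMod ℓ)) ℚ) K (X (some x)))
    rw [h1, h2]
  have hz_ne : z ≠ 0 := by
    rw [← hP_full 0]; exact hP_ne 0 ℓ
  have hu_def : ∀ a : ℕ, 1 ≤ a → a ≤ ℓ - 1 → u a = (Pf (-(a : ℤ)) (ℓ - a))⁻¹ := by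
    intro a h1 h2
    show (∏ b ∈ Finset.Icc a (ℓ - 1), qt (-(b : ℤ)))⁻¹ = _
    congr 1
    rw [show Finset.Icc a (ℓ - 1) = Finset.Ico a ℓ by
      rw [← Finset.Ico_add_one_right_eq_Icc, Nat.sub_add_cancel (by omega : 1 ≤ ℓ)]]
    rw [Finset.prod_Ico_eq_prod_range]
    refine Finset.prod_congr rfl fun b _ => ?_
    congr 1
    push_cast
    ring
  -- key identity for the `g` factors
  have keyg : ∀ A C : ℕ, 1 ≤ C → C < A → A ≤ ℓ - 1 →
      (u (ℓ - A))⁻¹ * u (ℓ - A + C) = Pf (A : ℤ) C := by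
    intro A C hC hCA hA
    rw [hu_def (ℓ - A) (by omega) (by omega), hu_def (ℓ - A + C) (by omega) (by omega), inv_inv]
    rw [show ℓ - (ℓ - A) = A from by omega, show ℓ - (ℓ - A + C) = A - C from by omega]
    have c1 : Pf (-((ℓ - A : ℕ) : ℤ)) A = Pf (A : ℤ) A :=
      hP_congr _ _ _ (int_cast_zmod_congr 1 (by omega))
    have c2 : Pf (-((ℓ - A + C : ℕ) : ℤ)) (A - C) = Pf ((A : ℤ) - C) (A - C) :=
      hP_congr _ _ _ (int_cast_zmod_congr 1 (by omega))
    rw [c1, c2]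
    have hs := hP_split (A : ℤ) C (A - C)
    rw [show C + (A - C) = A from by omega] at hs
    rw [show ((C : ℕ) : ℤ) = (C : ℤ) from rfl] at hs
    rw [hs, mul_inv_cancel_right₀ (hP_ne _ _)]
  -- key identity for the `f` factors
  have keyf : ∀ A C : ℕ, 1 ≤ A → A < C → C ≤ ℓ - 1 →
      z ^ k * u (C - A) * (u (ℓ - A))⁻¹ = z ^ (k - 1) * Pf (A : ℤ) C := by
    intro A C hA hAC hC
    rw [hu_def (C - A) (by omega) (by omega), hu_def (ℓ - A) (by omega) (by omega), inv_inv]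
    rw [show ℓ - (ℓ - A) = A from by omega]
    have c1 : Pf (-((ℓ - A : ℕ) : ℤ)) A = Pf (A : ℤ) A :=
      hP_congr _ _ _ (int_cast_zmod_congr 1 (by omega))
    have c2 : Pf (-((C - A : ℕ) : ℤ)) (ℓ - (C - A)) = Pf ((A : ℤ) - C) (ℓ - C + A) := by
      rw [show (-((C - A : ℕ) : ℤ)) = (A : ℤ) - C from by omega,
        show ℓ - (C - A) = ℓ - C + A from by omega]
    rw [c1, c2]
    -- main identity : z * Pf A A = Pf (A - C) (ℓ - C + A) * Pf A C
    have s1 : Pf (A : ℤ) (C + (ℓ - C)) = Pf (A : ℤ) C * Pf ((A : ℤ) - C) (ℓ - C) :=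
      hP_split _ _ _
    rw [show C + (ℓ - C) = ℓ from by omega, hP_full] at s1
    have s2 : Pf ((A : ℤ) - C) ((ℓ - C) + A)
        = Pf ((A : ℤ) - C) (ℓ - C) * Pf ((A : ℤ) - C - ((ℓ - C : ℕ) : ℤ)) A :=
      hP_split _ _ _
    rw [show ((A : ℤ) - C - ((ℓ - C : ℕ) : ℤ)) = ((A : ℤ) - ℓ) from by omega] at s2
    have c3 : Pf ((A : ℤ) - ℓ) A = Pf (A : ℤ) A :=
      hP_congr _ _ _ (int_cast_zmod_congr 1 (by omega))
    rw [c3, show (ℓ - C) + A = ℓ - C + A from rfl] at s2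
    have main : z * Pf (A : ℤ) A = Pf ((A : ℤ) - C) (ℓ - C + A) * Pf (A : ℤ) C := by
      rw [s2, s1]; ring
    have hzk : z ^ k = z ^ (k - 1) * z := by
      rw [← pow_succ]
      congr 1
      omega
    have h0 : Pf ((A : ℤ) - C) (ℓ - C + A) ≠ 0 := hP_ne _ _
    have hX : (Pf ((A : ℤ) - C) (ℓ - C + A))⁻¹ * Pf ((A : ℤ) - C) (ℓ - C + A) = 1 :=
      inv_mul_cancel₀ h0
    rw [hzk]
    linear_combination z ^ (k - 1) * (Pf ((A : ℤ) - C) (ℓ - C + A))⁻¹ * main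
      + z ^ (k - 1) * Pf (A : ℤ) C * hX
  -- nested-to-flat helper
  have flat : ∀ h : ℕ → ℕ → K,
      ∏ p ∈ (Finset.Icc 1 (ℓ - 1) ×ˢ Finset.Icc 1 (ℓ - 1)).filter
        (fun p : ℕ × ℕ => p.1 < p.2), h p.1 p.2
      = ∏ c ∈ Finset.Icc 1 (ℓ - 1), ∏ a ∈ Finset.Ico 1 c, h a c := by
    intro h
    rw [Finset.prod_filter, Finset.prod_product_right]
    refine Finset.prod_congr rfl fun c hc => ?_
    have hc' : c ≤ ℓ - 1 := (Finset.mem_Icc.mp hc).2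
    rw [← Finset.prod_filter]
    congr 1
    ext x
    simp only [Finset.mem_filter, Finset.mem_Icc, Finset.mem_Ico]
    omega
  -- split the LHS index set
  have hsetsplit : (Finset.Icc 1 (ℓ - 1) ×ˢ Finset.Icc 1 (ℓ - 1)).filter
        (fun p : ℕ × ℕ => p.1 ≠ p.2)
      = (Finset.Icc 1 (ℓ - 1) ×ˢ Finset.Icc 1 (ℓ - 1)).filter
          (fun p : ℕ × ℕ => p.1 < p.2)
        ∪ (Finset.Icc 1 (ℓ - 1) ×ˢ Finset.Icc 1 (ℓ - 1)).filter
          (fun p : ℕ × ℕ => p.2 < p.1) := by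
    ext p
    simp only [Finset.mem_filter, Finset.mem_union, Finset.mem_product, Finset.mem_Icc]
    omega
  have hdisj : Disjoint
      ((Finset.Icc 1 (ℓ - 1) ×ˢ Finset.Icc 1 (ℓ - 1)).filter (fun p : ℕ × ℕ => p.1 < p.2))
      ((Finset.Icc 1 (ℓ - 1) ×ˢ Finset.Icc 1 (ℓ - 1)).filter (fun p : ℕ × ℕ => p.2 < p.1)) := by
    rw [Finset.disjoint_left]
    intro p hp hq
    simp only [Finset.mem_filter] at hp hq
    omega
  simp only [Finset.prod_mul_distrib]
  rw [hsetsplit, Finset.prod_union hdisj]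
  congr 1
  · -- the `f` (z^k) half
    refine Eq.trans ?_ (flat _)
    refine Finset.prod_nbij' (fun p => (p.2 - p.1, ℓ - p.1)) (fun p => (ℓ - p.2, ℓ - p.2 + p.1))
      ?_ ?_ ?_ ?_ ?_
    · intro p hp
      simp only [Finset.mem_filter, Finset.mem_product, Finset.mem_Icc] at hp ⊢
      omega
    · intro p hp
      simp only [Finset.mem_filter, Finset.mem_product, Finset.mem_Icc] at hp ⊢
      omega
    · intro p hp
      simp only [Finset.mem_filter, Finset.mem_product, Finset.mem_Icc] at hp
      simp only [Prod.ext_iff]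
      omega
    · intro p hp
      simp only [Finset.mem_filter, Finset.mem_product, Finset.mem_Icc] at hp
      simp only [Prod.ext_iff]
      omega
    · intro p hp
      obtain ⟨A, C⟩ := p
      simp only [Finset.mem_filter, Finset.mem_product, Finset.mem_Icc] at hp
      obtain ⟨⟨⟨hA1, hA2⟩, hC1, hC2⟩, hAC⟩ := hp
      simp only []
      rw [show ((ℓ : ℤ) - ((ℓ - A : ℕ) : ℤ)) = ((A : ℕ) : ℤ) from by omega]
      refine Finset.prod_congr rfl fun t _ => ?_
      have hfold : ∏ b ∈ Finset.range C, qt ((A : ℤ) - (b : ℤ)) = Pf (A : ℤ) C := rfl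
      rw [hfold]
      linear_combination (y ^ (-(2 * (t : ℤ)))) * keyf A C hA1 hAC hC2
  · -- the `g` (z^(k-1)) half
    refine Eq.trans ?_ (flat _)
    refine Finset.prod_nbij' (fun p => (ℓ - p.1, ℓ - p.1 + p.2)) (fun p => (ℓ - p.1, p.2 - p.1))
      ?_ ?_ ?_ ?_ ?_
    · intro p hp
      simp only [Finset.mem_filter, Finset.mem_product, Finset.mem_Icc] at hp ⊢
      omega
    · intro p hp
      simp only [Finset.mem_filter, Finset.mem_product, Finset.mem_Icc] at hp ⊢
      omega
    · intro p hp
      simp only [Finset.mem_filter, Finset.mem_product, Finset.mem_Icc] at hp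
      simp only [Prod.ext_iff]
      omega
    · intro p hp
      simp only [Finset.mem_filter, Finset.mem_product, Finset.mem_Icc] at hp
      simp only [Prod.ext_iff]
      omega
    · intro p hp
      obtain ⟨A, C⟩ := p
      simp only [Finset.mem_filter, Finset.mem_product, Finset.mem_Icc] at hp
      obtain ⟨⟨⟨hA1, hA2⟩, hC1, hC2⟩, hCA⟩ := hp
      simp only []
      rw [show ((ℓ : ℤ) - ((ℓ - A : ℕ) : ℤ)) = ((A : ℕ) : ℤ) from by omega]
      refine Finset.prod_congr rfl fun t _ => ?_
      have hfold : ∏ b ∈ Finset.range C, qt ((A : ℤ) - (b : ℤ)) = Pf (A : ℤ) C := rfl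
      rw [hfold]
      linear_combination (y ^ (-(2 * (t : ℤ))) * z ^ (k - 1)) * keyg A C hC1 hCA hA2
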